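/- For a fibrewise space X over B, the sequential parametrized topological complexity TC_{B,r}(X) := secat_B(Π_{r,X}) equals D_B(pr_1,...,pr_r), where pr_i : X_B^r → X are the projections of the r-fold fibred product. -/

import Mathlib

open Set

/-- Two continuous maps are fibrewise homotopic over `B`: there is a homotopy
whose every time-slice commutes with the projections to `B`. -/
def FibHomotopic {B X Y : Type*} [TopologicalSpace B] [TopologicalSpace X] [TopologicalSpace Y]
    (pX : X → B) (pY : Y → B) (f g : C(X, Y)) : Prop :=
  ∃ H : f.Homotopy g, ∀ (x : X) (t : unitInterval), pY (H (t, x)) = pX x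

/-- Sequential parametrized homotopic distance of a family of fibrewise maps:
the least `n` such that `X` admits an open cover by `n + 1` open sets on each of
which all the maps are pairwise fibrewise homotopic (`∞` if none exists). -/
noncomputable def fibDist {B X Y ι : Type*} [TopologicalSpace B] [TopologicalSpace X]
    [TopologicalSpace Y] (pX : X → B) (pY : Y → B) (f : ι → C(X, Y)) : ℕ∞ :=
  sInf {n : ℕ∞ | ∃ k : ℕ, (k : ℕ∞) = n ∧ ∃ U : Fin (k + 1) → Set X,
    (∀ i, IsOpen (U i)) ∧ (⋃ i, U i) = Set.univ ∧
    ∀ i s t, FibHomotopic (fun x : U i => pX (x : X)) pY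
      ((f s).restrict (U i)) ((f t).restrict (U i))}

/-- Fibrewise sectional category of a fibrewise map `f : E → X` over `B`: the least `k`
such that `X` has an open cover by `k + 1` open sets, each admitting a fibrewise map
`s : U → E` with `f ∘ s` fibrewise homotopic to the inclusion. -/
noncomputable def fibSecat {B E X : Type*} [TopologicalSpace B] [TopologicalSpace E]
    [TopologicalSpace X] (pE : E → B) (pX : X → B) (f : C(E, X)) : ℕ∞ :=
  sInf {n : ℕ∞ | ∃ k : ℕ, (k : ℕ∞) = n ∧ ∃ U : Fin (k + 1) → Set X,
    (∀ i, IsOpen (U i)) ∧ (⋃ i, U i) = Set.univ ∧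
    ∀ i, ∃ s : C(U i, E), (∀ x : U i, pE (s x) = pX (x : X)) ∧
      FibHomotopic (fun x : U i => pX (x : X)) pX (f.comp s)
        ⟨Subtype.val, continuous_subtype_val⟩}

/-- The fibrewise free path space of `Y` over `B`: pairs `(b, γ)` with `p_Y ∘ γ`
constant at `b`. -/
abbrev FibPathSpace {B Y : Type*} [TopologicalSpace B] [TopologicalSpace Y] (pY : Y → B) :
    Type _ := {z : B × C(unitInterval, Y) // ∀ t, pY (z.2 t) = z.1}

/-- The `r`-fold fibred product of `Y` over `B`. -/
abbrev FibPow {B Y : Type*} [TopologicalSpace B] [TopologicalSpace Y] (pY : Y → B) (r : ℕ) :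
    Type _ := {v : Fin r → Y // ∀ i j, pY (v i) = pY (v j)}

/-- The time `i / (r - 1)` in the unit interval. -/
noncomputable def evalTime (r : ℕ) (i : Fin r) : unitInterval :=
  ⟨(i : ℝ) / ((r : ℝ) - 1), by
    have h1 : 1 ≤ r := Nat.one_le_iff_ne_zero.mpr (by rintro rfl; exact i.elim0)
    have h0 : (0:ℝ) ≤ (r:ℝ) - 1 := by
      have : (1:ℝ) ≤ (r:ℝ) := by exact_mod_cast h1
      linarith
    have hi : (i:ℝ) ≤ (r:ℝ) - 1 := by
      have h2 : ((i:ℕ):ℝ) ≤ ((r - 1 : ℕ):ℝ) := Nat.cast_le.mpr (by omega)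
      rwa [Nat.cast_sub h1, Nat.cast_one] at h2
    exact ⟨div_nonneg (by positivity) h0, div_le_one_of_le₀ hi h0⟩⟩

/-- The fibrewise evaluation fibration `Π_{r,Y} : P_B(Y) → Y_B^r`, sending `(b, γ)` to
`(γ(0), γ(1/(r-1)), …, γ(1))`. -/
noncomputable def fibPi {B Y : Type*} [TopologicalSpace B] [TopologicalSpace Y] (pY : Y → B)
    (r : ℕ) : C(FibPathSpace pY, FibPow pY r) :=
  ⟨fun z => ⟨fun i => z.1.2 (evalTime r i),
      fun i j => (z.2 (evalTime r i)).trans (z.2 (evalTime r j)).symm⟩, by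
    apply Continuous.subtype_mk
    exact continuous_pi fun i =>
      (continuous_eval_const (evalTime r i)).comp
        (continuous_snd.comp continuous_subtype_val)⟩

/-- The `i`-th projection `Y_B^r → Y`. -/
def fibPrj {B Y : Type*} [TopologicalSpace B] [TopologicalSpace Y] (pY : Y → B) (r : ℕ)
    (i : Fin r) : C(FibPow pY r, Y) :=
  ⟨fun v => v.1 i, ((continuous_apply i).comp continuous_subtype_val)⟩

section Aux

open unitInterval

lemma FibHomotopic.fsymm {B X Y : Type*} [TopologicalSpace B] [TopologicalSpace X]
    [TopologicalSpace Y] {pX : X → B} {pY : Y → B} {f g : C(X, Y)}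
    (h : FibHomotopic pX pY f g) : FibHomotopic pX pY g f := by
  obtain ⟨H, hH⟩ := h
  exact ⟨H.symm, fun x t => by simp only [ContinuousMap.Homotopy.symm_apply]; exact hH x _⟩

lemma FibHomotopic.ftrans {B X Y : Type*} [TopologicalSpace B] [TopologicalSpace X]
    [TopologicalSpace Y] {pX : X → B} {pY : Y → B} {f g h : C(X, Y)}
    (h1 : FibHomotopic pX pY f g) (h2 : FibHomotopic pX pY g h) :
    FibHomotopic pX pY f h := by
  obtain ⟨H, hH⟩ := h1; obtain ⟨K, hK⟩ := h2
  refine ⟨H.trans K, fun x t => ?_⟩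
  rw [ContinuousMap.Homotopy.trans_apply]
  split_ifs
  · exact hH x _
  · exact hK x _

lemma secat_to_dist {B X : Type*} [TopologicalSpace B] [TopologicalSpace X]
    (r : ℕ) [NeZero r] (pX : X → B) (U : Set (FibPow pX r))
    (s : C(U, FibPathSpace pX))
    (hs : ∀ x : U, (s x).1.1 = pX ((x : FibPow pX r).1 0))
    (hH : FibHomotopic (fun x : U => pX ((x : FibPow pX r).1 0))
        (fun v : FibPow pX r => pX (v.1 0)) ((fibPi pX r).comp s)
        ⟨Subtype.val, continuous_subtype_val⟩)
    (a b : Fin r) :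
    FibHomotopic (fun x : U => pX ((x : FibPow pX r).1 0)) pX
      ((fibPrj pX r a).restrict U) ((fibPrj pX r b).restrict U) := by
  obtain ⟨H, hHf⟩ := hH
  have key : ∀ c : Fin r, FibHomotopic (fun x : U => pX ((x : FibPow pX r).1 0)) pX
      ((fibPrj pX r c).comp ((fibPi pX r).comp s)) ((fibPrj pX r c).restrict U) := by
    intro c
    refine ⟨⟨⟨fun p => (H p).1 c,
        ((continuous_apply c).comp continuous_subtype_val).comp H.continuous⟩, ?_, ?_⟩, ?_⟩
    · intro x
      show (H (0, x)).1 c = _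
      rw [ContinuousMap.Homotopy.apply_zero]
      rfl
    · intro x
      show (H (1, x)).1 c = _
      rw [ContinuousMap.Homotopy.apply_one]
      rfl
    · intro x t
      show pX ((H (t, x)).1 c) = _
      rw [(H (t, x)).2 c 0]
      exact hHf x t
  have hmid : FibHomotopic (fun x : U => pX ((x : FibPow pX r).1 0)) pX
      ((fibPrj pX r a).comp ((fibPi pX r).comp s))
      ((fibPrj pX r b).comp ((fibPi pX r).comp s)) := by
    have hmem : ∀ t : unitInterval,
        (1 - (t : ℝ)) * (evalTime r a : ℝ) + (t : ℝ) * (evalTime r b : ℝ) ∈ I := by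
      intro t
      have h1 := t.2.1; have h2 := t.2.2
      have h3 := (evalTime r a).2.1; have h4 := (evalTime r a).2.2
      have h5 := (evalTime r b).2.1; have h6 := (evalTime r b).2.2
      constructor
      · nlinarith
      · nlinarith
    refine ⟨⟨⟨fun p => (s p.2).1.2
        ⟨(1 - (p.1 : ℝ)) * (evalTime r a : ℝ) + (p.1 : ℝ) * (evalTime r b : ℝ), hmem p.1⟩,
        ?_⟩, ?_, ?_⟩, ?_⟩
    · apply Continuous.eval
      · exact continuous_snd.comp (continuous_subtype_val.comp
          (s.continuous.comp continuous_snd))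
      · apply Continuous.subtype_mk
        fun_prop
    · intro x
      show (s x).1.2 _ = (s x).1.2 (evalTime r a)
      congr 1
      apply Subtype.ext
      show (1 - ((0 : unitInterval) : ℝ)) * _ + ((0 : unitInterval) : ℝ) * _ = _
      norm_num
    · intro x
      show (s x).1.2 _ = (s x).1.2 (evalTime r b)
      congr 1
      apply Subtype.ext
      show (1 - ((1 : unitInterval) : ℝ)) * _ + ((1 : unitInterval) : ℝ) * _ = _
      norm_num
    · intro x t
      show pX ((s x).1.2 _) = _
      rw [(s x).2, hs x]
  exact ((key a).fsymm.ftrans hmid).ftrans (key b)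

lemma dist_to_secat {B X : Type*} [TopologicalSpace B] [TopologicalSpace X]
    (r : ℕ) [NeZero r] (pX : X → B) (hpX : Continuous pX) (U : Set (FibPow pX r))
    (h : ∀ a b : Fin r, FibHomotopic (fun x : U => pX ((x : FibPow pX r).1 0)) pX
      ((fibPrj pX r a).restrict U) ((fibPrj pX r b).restrict U)) :
    ∃ s : C(U, FibPathSpace pX),
      (∀ x : U, (s x).1.1 = pX ((x : FibPow pX r).1 0)) ∧
      FibHomotopic (fun x : U => pX ((x : FibPow pX r).1 0))
        (fun v : FibPow pX r => pX (v.1 0))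
        ((fibPi pX r).comp s) ⟨Subtype.val, continuous_subtype_val⟩ := by
  choose K hK using h
  refine ⟨⟨fun x => ⟨(pX ((x : FibPow pX r).1 0),
      ContinuousMap.const unitInterval ((x : FibPow pX r).1 0)), fun t => rfl⟩, ?_⟩,
      fun x => rfl, ?_⟩
  · apply Continuous.subtype_mk
    apply Continuous.prodMk
    · exact hpX.comp ((continuous_apply (0 : Fin r)).comp
        (continuous_subtype_val.comp continuous_subtype_val))
    · exact ContinuousMap.const'.continuous.comp ((continuous_apply (0 : Fin r)).comp
        (continuous_subtype_val.comp continuous_subtype_val))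
  · refine ⟨⟨⟨fun p => ⟨fun i => K 0 i p, fun i j => ?_⟩,
        Continuous.subtype_mk (continuous_pi fun i => (K 0 i).continuous) _⟩, ?_, ?_⟩, ?_⟩
    · rw [show p = (p.1, p.2) from rfl, hK 0 i p.2 p.1, hK 0 j p.2 p.1]
    · intro x
      apply Subtype.ext
      funext i
      show (K 0 i) (0, x) = _
      rw [ContinuousMap.Homotopy.apply_zero]
      rfl
    · intro x
      apply Subtype.ext
      funext i
      show (K 0 i) (1, x) = _
      rw [ContinuousMap.Homotopy.apply_one]
      rfl
    · intro x t
      exact hK 0 0 x t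

end Aux

/-- The sequential parametrized topological complexity `TC_{B,r}(X) = secat_B(Π_{r,X})`
equals `D_B(pr_1, …, pr_r)` for the projections of the `r`-fold fibred product. -/
theorem stmt16 {B X : Type*} [TopologicalSpace B] [TopologicalSpace X]
    (r : ℕ) [NeZero r] (hr : 2 ≤ r) (pX : X → B) (hpX : Continuous pX) :
    fibSecat (fun z : FibPathSpace pX => z.1.1) (fun v : FibPow pX r => pX (v.1 0))
        (fibPi pX r) =
      fibDist (fun v : FibPow pX r => pX (v.1 0)) pX (fibPrj pX r) := by
  unfold fibSecat fibDist
  congr 1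
  ext n
  simp only [Set.mem_setOf_eq]
  constructor
  · rintro ⟨k, rfl, U, hU, hcov, hsec⟩
    refine ⟨k, rfl, U, hU, hcov, fun i a b => ?_⟩
    obtain ⟨s, hs, hH⟩ := hsec i
    exact secat_to_dist r pX (U i) s hs hH a b
  · rintro ⟨k, rfl, U, hU, hcov, hd⟩
    exact ⟨k, rfl, U, hU, hcov, fun i => dist_to_secat r pX hpX (U i) (hd i)⟩
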